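/- Let p = 4m+1 be prime with m ≥ 1 and let δ₁, δ₂ ∈ {1, −1}. Then the integer determinant D = det[(j+k / p) + (j−k / p) + δ₁·(j²+δ₂k² / p)]_{0≤j,k≤2m}, where (· / p) denotes the Legendre symbol, satisfies the congruence D ≡ (−1)^{m(2m+1)} · δ₁^{2m+1} · δ₂^{m(2m+1)} · (∏_{r=0}^{2m} binom(2m, r)) · ∏_{0≤i<j≤2m} (j² − i²)² (mod p). -/
import Mathlib


open Matrix BigOperators Finset

open Equiv


lemma revPerm_succ_eq (n : ℕ) :
    (Fin.revPerm : Equiv.Perm (Fin (n+1)))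
      = (Equiv.Perm.decomposeFin.symm (0, (Fin.revPerm : Equiv.Perm (Fin n)))) * finRotate (n+1) := by
  ext i
  cases i using Fin.lastCases with
  | last => simp [finRotate_last]
  | cast i => simp [Fin.rev_castSucc, Fin.coeSucc_eq_succ]

lemma sign_revPerm (n : ℕ) :
    Equiv.Perm.sign (Fin.revPerm : Equiv.Perm (Fin n)) = (-1)^(n*(n-1)/2) := by
  induction n with
  | zero =>
    have : (Fin.revPerm : Equiv.Perm (Fin 0)) = 1 := Subsingleton.elim _ _
    simp [this]
  | succ n ih =>
    rw [revPerm_succ_eq, _root_.map_mul, sign_finRotate, Equiv.Perm.decomposeFin.symm_sign, ih]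
    simp only [reduceIte, one_mul, ← pow_add]
    congr 1
    rcases n with _ | k
    · simp
    · simp only [Nat.add_sub_cancel]
      obtain ⟨t, ht⟩ : Even ((k+1)*k) := by simpa [mul_comm] using Nat.even_mul_succ_self k
      have h4 : (k+1+1)*(k+1) = (k+1)*k + 2*(k+1) := by ring
      omega

section Helpers
variable {R : Type*} [CommRing R]

lemma collapseSum (N c : ℕ) (hc : c < N) (g : ℕ → R) (P : ℕ → Prop) [DecidablePred P]
    (hP : ∀ a, P a ↔ a = c) (v : R) :
    ∑ a ∈ range N, g a * (if P a then v else 0) = g c * v := by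
  have h : ∀ a ∈ range N, g a * (if P a then v else 0) = if a = c then g a * v else 0 := by
    intro a _
    by_cases h : P a
    · rw [if_pos h, if_pos ((hP a).mp h)]
    · rw [if_neg h, if_neg (fun e => h ((hP a).mpr e)), mul_zero]
  rw [Finset.sum_congr rfl h, Finset.sum_ite_eq' (Finset.range N) c (fun a => g a * v),
    if_pos (Finset.mem_range.mpr hc)]

lemma evenSum (x y : R) (n : ℕ) :
    (x + y)^(2*n) + (x - y)^(2*n)
      = ∑ b ∈ range (n+1), 2 * (((2*n).choose (2*b)) : R) * x^(2*(n-b)) * y^(2*b) := by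
  have hinj : ∀ b1 ∈ range (n+1), ∀ b2 ∈ range (n+1), 2*n - 2*b1 = 2*n - 2*b2 → b1 = b2 := by
    intro b1 h1 b2 h2 h
    simp only [mem_range] at h1 h2
    omega
  have hsub : (range (n+1)).image (fun b => 2*n - 2*b) ⊆ range (2*n+1) := by
    intro r hr
    simp only [mem_image, mem_range] at hr ⊢
    omega
  have hL : (x + y)^(2*n) + (x - y)^(2*n)
      = ∑ r ∈ range (2*n+1), x ^ r * y ^ (2*n - r) * (((2*n).choose r : R)) * (1 + (-1:R)^(2*n-r)) := by
    rw [sub_eq_add_neg, add_pow, add_pow, ← Finset.sum_add_distrib]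
    refine Finset.sum_congr rfl fun r hr => ?_
    rw [neg_pow y]
    ring
  have hzero : ∀ r ∈ range (2*n+1), r ∉ (range (n+1)).image (fun b => 2*n - 2*b) →
      x ^ r * y ^ (2*n - r) * (((2*n).choose r : R)) * (1 + (-1:R)^(2*n-r)) = 0 := by
    intro r hr hnot
    simp only [mem_range] at hr
    have hodd : Odd (2*n - r) := by
      rcases Nat.even_or_odd r with ⟨c, hc⟩ | ⟨c, hc⟩
      · exfalso
        exact hnot (Finset.mem_image.mpr ⟨n - c, Finset.mem_range.mpr (by omega), by omega⟩)
      · exact ⟨n - c - 1, by omega⟩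
    rw [hodd.neg_one_pow]
    ring
  rw [hL, ← Finset.sum_subset hsub hzero, Finset.sum_image hinj]
  refine Finset.sum_congr rfl fun b hb => ?_
  simp only [mem_range] at hb
  have e1 : 2*n - (2*n - 2*b) = 2*b := by omega
  have e2 : 2*n - 2*b = 2*(n-b) := by omega
  have e3 : (2*n).choose (2*n - 2*b) = (2*n).choose (2*b) := Nat.choose_symm (by omega)
  rw [e1, e3, e2, Even.neg_one_pow ⟨b, by ring⟩]
  ring

lemma prodTriangle (n : ℕ) (f : ℕ → ℕ → R) :
    ∏ i ∈ range n, ∏ j ∈ Ico (i+1) n, f i j = ∏ j ∈ range n, ∏ i ∈ range j, f i j := by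
  induction n with
  | zero => simp
  | succ n ih =>
    have h1 : ∏ i ∈ range (n+1), ∏ j ∈ Ico (i+1) (n+1), f i j
        = ∏ i ∈ range n, ((∏ j ∈ Ico (i+1) n, f i j) * f i n) := by
      rw [Finset.prod_range_succ, Finset.Ico_self, Finset.prod_empty, mul_one]
      refine Finset.prod_congr rfl fun i hi => ?_
      simp only [mem_range] at hi
      exact Finset.prod_Ico_succ_top (by omega) _
    rw [h1, Finset.prod_mul_distrib, ih, ← Finset.prod_range_succ]

lemma prodIoi (n : ℕ) (i : Fin n) (f : ℕ → R) :
    ∏ j ∈ Finset.Ioi i, f (j:ℕ) = ∏ j ∈ Finset.Ico ((i:ℕ)+1) n, f j := by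
  have h : Finset.Ico ((i:ℕ)+1) n = (Finset.Ioi i).map Fin.valEmbedding := by
    ext a
    simp only [Finset.mem_map, Finset.mem_Ioi, Finset.mem_Ico, Fin.valEmbedding_apply]
    constructor
    · rintro ⟨h1, h2⟩
      exact ⟨⟨a, h2⟩, by simp [Fin.lt_def]; omega, rfl⟩
    · rintro ⟨b, hb, rfl⟩
      rw [Fin.lt_def] at hb
      exact ⟨by omega, b.isLt⟩
  rw [h, Finset.prod_map]
  rfl

end Helpers

lemma entry_eq {R : Type*} [CommRing R] (m : ℕ) (d1 d2 X Y : R) :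
    ∑ b ∈ range (2*m+1), (∑ a ∈ range (2*m+1), X^(2*a) *
        ((if a+b = m then 2 * (((2*m).choose (2*b)) : R) else 0)
          + d1 * (if a+b = 2*m then d2^b * (((2*m).choose b) : R) else 0))) * Y^(2*b)
      = (X + Y)^(2*m) + (X - Y)^(2*m) + d1 * (X^2 + d2 * Y^2)^(2*m) := by
  have hinner : ∀ b ∈ range (2*m+1),
      (∑ a ∈ range (2*m+1), X^(2*a) *
        ((if a+b = m then 2 * (((2*m).choose (2*b)) : R) else 0)
          + d1 * (if a+b = 2*m then d2^b * (((2*m).choose b) : R) else 0)))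
      = (if b ≤ m then 2 * (((2*m).choose (2*b)) : R) * X^(2*(m-b)) else 0)
        + d1 * (d2^b * (((2*m).choose b) : R)) * X^(2*(2*m-b)) := by
    intro b hb
    simp only [mem_range] at hb
    rw [Finset.sum_congr rfl (fun a _ => mul_add (X^(2*a)) _ _), Finset.sum_add_distrib]
    congr 1
    · rcases le_or_gt b m with h | h
      · rw [if_pos h,
          collapseSum (2*m+1) (m-b) (by omega) (fun a => X^(2*a)) (fun a => a + b = m)
            (fun a => by omega) _]
        ring
      · rw [if_neg (by omega)]
        exact Finset.sum_eq_zero fun a _ => by rw [if_neg (by omega), mul_zero]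
    · rw [Finset.sum_congr rfl (fun a _ => by
          rw [show X^(2*a) * (d1 * (if a+b = 2*m then d2^b * (((2*m).choose b) : R) else 0))
              = (X^(2*a) * d1) * (if a+b = 2*m then d2^b * (((2*m).choose b) : R) else 0) by ring]),
        collapseSum (2*m+1) (2*m-b) (by omega) (fun a => X^(2*a) * d1) (fun a => a + b = 2*m)
          (fun a => by omega) _]
      ring
  rw [Finset.sum_congr rfl (fun b hb => by rw [hinner b hb, add_mul]), Finset.sum_add_distrib]
  have hS1 : ∑ b ∈ range (2*m+1),
      (if b ≤ m then 2 * (((2*m).choose (2*b)) : R) * X^(2*(m-b)) else 0) * Y^(2*b)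
      = (X + Y)^(2*m) + (X - Y)^(2*m) := by
    rw [evenSum X Y m]
    have hsub : range (m+1) ⊆ range (2*m+1) := by
      intro b hb; simp only [mem_range] at hb ⊢; omega
    rw [← Finset.sum_subset hsub (fun b hb hnb => by
      simp only [mem_range] at hb hnb
      rw [if_neg (by omega), zero_mul])]
    refine Finset.sum_congr rfl fun b hb => ?_
    simp only [mem_range] at hb
    rw [if_pos (by omega)]
  have hS2 : ∑ b ∈ range (2*m+1),
      (d1 * (d2^b * (((2*m).choose b) : R)) * X^(2*(2*m-b))) * Y^(2*b)
      = d1 * (X^2 + d2 * Y^2)^(2*m) := by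
    rw [add_pow, ← Finset.sum_range_reflect, Finset.mul_sum]
    refine Finset.sum_congr rfl fun b hb => ?_
    simp only [mem_range] at hb
    have h1 : 2*m+1-1-b = 2*m-b := by omega
    have h2 : 2*m-(2*m-b) = b := by omega
    have h3 : (2*m).choose (2*m-b) = (2*m).choose b := Nat.choose_symm (by omega)
    rw [h1, h2, h3, mul_pow]
    ring
  rw [hS1, hS2]

lemma coreDet {R : Type*} [CommRing R] (m : ℕ) (hm : 1 ≤ m) (d1 d2 : R) (x : Fin (2*m+1) → R) :
    (Matrix.of fun j k : Fin (2*m+1) =>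
        (x j + x k)^(2*m) + (x j - x k)^(2*m) + d1 * ((x j)^2 + d2 * (x k)^2)^(2*m)).det
      = (-1 : R)^(m*(2*m+1)) * d1^(2*m+1) * d2^(m*(2*m+1))
          * (∏ r ∈ range (2*m+1), (((2*m).choose r) : R))
          * (∏ i : Fin (2*m+1), ∏ j ∈ Finset.Ioi i, ((x j)^2 - (x i)^2))^2 := by
  set W : Matrix (Fin (2*m+1)) (Fin (2*m+1)) R :=
    Matrix.of fun j a => (x j)^(2*(a:ℕ)) with hW
  set A : Matrix (Fin (2*m+1)) (Fin (2*m+1)) R := Matrix.of fun a b =>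
      (if (a:ℕ)+(b:ℕ) = m then 2 * (((2*m).choose (2*(b:ℕ))) : R) else 0)
      + d1 * (if (a:ℕ)+(b:ℕ) = 2*m then d2^(b:ℕ) * (((2*m).choose (b:ℕ)) : R) else 0) with hA
  have hfact : (Matrix.of fun j k : Fin (2*m+1) =>
        (x j + x k)^(2*m) + (x j - x k)^(2*m) + d1 * ((x j)^2 + d2 * (x k)^2)^(2*m))
      = W * A * Wᵀ := by
    ext j k
    have h1 : ∀ b : Fin (2*m+1), (∑ a : Fin (2*m+1), W j a * A a b)
        = ∑ a ∈ range (2*m+1), (x j)^(2*a) *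
            ((if a+(b:ℕ) = m then 2 * (((2*m).choose (2*(b:ℕ))) : R) else 0)
              + d1 * (if a+(b:ℕ) = 2*m then d2^(b:ℕ) * (((2*m).choose (b:ℕ)) : R) else 0)) :=
      fun b => Fin.sum_univ_eq_sum_range (fun a => (x j)^(2*a) *
            ((if a+(b:ℕ) = m then 2 * (((2*m).choose (2*(b:ℕ))) : R) else 0)
              + d1 * (if a+(b:ℕ) = 2*m then d2^(b:ℕ) * (((2*m).choose (b:ℕ)) : R) else 0))) (2*m+1)
    have h2 : (W * A * Wᵀ) j k
        = ∑ b ∈ range (2*m+1), (∑ a ∈ range (2*m+1), (x j)^(2*a) *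
            ((if a+b = m then 2 * (((2*m).choose (2*b)) : R) else 0)
              + d1 * (if a+b = 2*m then d2^b * (((2*m).choose b) : R) else 0))) * (x k)^(2*b) := by
      rw [← Fin.sum_univ_eq_sum_range (fun b => (∑ a ∈ range (2*m+1), (x j)^(2*a) *
            ((if a+b = m then 2 * (((2*m).choose (2*b)) : R) else 0)
              + d1 * (if a+b = 2*m then d2^b * (((2*m).choose b) : R) else 0))) * (x k)^(2*b)) (2*m+1)]
      simp only [Matrix.mul_apply, Matrix.transpose_apply]
      exact Finset.sum_congr rfl fun b _ => by rw [h1 b]; rfl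
    rw [h2, entry_eq m d1 d2 (x j) (x k)]
    rfl
  rw [hfact, Matrix.det_mul, Matrix.det_mul, Matrix.det_transpose]
  have hdetW : W.det = ∏ i : Fin (2*m+1), ∏ j ∈ Finset.Ioi i, ((x j)^2 - (x i)^2) := by
    have hv : W = Matrix.vandermonde (fun j => (x j)^2) := by
      ext j a
      simp only [hW, Matrix.of_apply, Matrix.vandermonde_apply]
      rw [pow_mul]
    rw [hv, Matrix.det_vandermonde]
  have htri : (A.submatrix id Fin.revPerm).BlockTriangular id := by
    intro a b hba
    simp only [id_eq] at hba
    rw [Fin.lt_def] at hba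
    simp only [Matrix.submatrix_apply, hA, Matrix.of_apply, Fin.revPerm_apply, id_eq, Fin.val_rev]
    have hb : (b:ℕ) < 2*m+1 := b.isLt
    have ha : (a:ℕ) < 2*m+1 := a.isLt
    rw [if_neg (by omega), if_neg (by omega), mul_zero, add_zero]
  have hdiag : ∀ a : Fin (2*m+1), (A.submatrix id Fin.revPerm) a a
      = d1 * (d2^(2*m-(a:ℕ)) * (((2*m).choose (2*m-(a:ℕ))) : R)) := by
    intro a
    have ha : (a:ℕ) < 2*m+1 := a.isLt
    simp only [Matrix.submatrix_apply, hA, Matrix.of_apply, Fin.revPerm_apply, id_eq, Fin.val_rev]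
    rw [show 2*m+1 - ((a:ℕ)+1) = 2*m-(a:ℕ) by omega]
    rw [if_neg (by omega), if_pos (by omega), zero_add]
  have hdetU : (A.submatrix id Fin.revPerm).det
      = d1^(2*m+1) * d2^(m*(2*m+1)) * ∏ r ∈ range (2*m+1), (((2*m).choose r) : R) := by
    rw [Matrix.det_of_upperTriangular htri]
    rw [Finset.prod_congr rfl (fun a (_ : a ∈ (Finset.univ : Finset (Fin (2*m+1)))) => hdiag a)]
    rw [Fin.prod_univ_eq_prod_range (fun a => d1 * (d2^(2*m-a) * (((2*m).choose (2*m-a)) : R))) (2*m+1)]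
    have hrefl := Finset.prod_range_reflect
      (fun a => d1 * (d2^a * (((2*m).choose a) : R))) (2*m+1)
    have heq : ∀ a ∈ range (2*m+1),
        d1 * (d2^(2*m-a) * (((2*m).choose (2*m-a)) : R))
          = d1 * (d2^(2*m+1-1-a) * (((2*m).choose (2*m+1-1-a)) : R)) := by
      intro a ha
      congr 2 <;> · congr 1; omega
    rw [Finset.prod_congr rfl heq, hrefl, Finset.prod_mul_distrib, Finset.prod_mul_distrib,
      Finset.prod_const, Finset.card_range, Finset.prod_pow_eq_pow_sum]
    rw [show ∑ a ∈ range (2*m+1), a = m*(2*m+1) from ?_]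
    · ring
    have hsum : ∑ a ∈ range (2*m+1), a = m*(2*m+1) := by
      have h2 := Finset.sum_range_id_mul_two (2*m+1)
      have h3 : (2*m+1) * (2*m+1-1) = (m*(2*m+1))*2 := by
        simp only [Nat.add_sub_cancel]
        ring
      omega
    exact hsum
  have hsign := Matrix.det_permute' (Fin.revPerm : Equiv.Perm (Fin (2*m+1))) A
  rw [sign_revPerm, hdetU] at hsign
  have hexp : (2*m+1)*((2*m+1)-1)/2 = m*(2*m+1) := by
    have h3 : (2*m+1) * (2*m+1-1) = (m*(2*m+1))*2 := by
      simp only [Nat.add_sub_cancel]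
      ring
    omega
  rw [hexp] at hsign
  have hunit : (((((-1:ℤˣ)^(m*(2*m+1)) : ℤˣ)) : ℤ) : R) = (-1:R)^(m*(2*m+1)) := by
    push_cast
    rfl
  rw [hunit] at hsign
  have hAdet : A.det = (-1:R)^(m*(2*m+1))
      * (d1^(2*m+1) * d2^(m*(2*m+1)) * ∏ r ∈ range (2*m+1), (((2*m).choose r) : R)) := by
    have hsq : (-1:R)^(m*(2*m+1)) * (-1:R)^(m*(2*m+1)) = 1 := by
      rw [← pow_add, ← two_mul, pow_mul]
      simp
    calc A.det = ((-1:R)^(m*(2*m+1)) * (-1:R)^(m*(2*m+1))) * A.det := by rw [hsq, one_mul]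
      _ = (-1:R)^(m*(2*m+1)) * ((-1:R)^(m*(2*m+1)) * A.det) := by ring
      _ = _ := by rw [← hsign]
  rw [hdetW, hAdet]
  ring

/-- Exact congruence refinement of Sun's Conjecture 4.10(i), standard half-system. -/
theorem stmt_13 (m : ℕ) (hm : 1 ≤ m) (p : ℕ) (hpm : p = 4 * m + 1) [Fact p.Prime]
    (δ₁ δ₂ : ℤ) (hδ₁ : δ₁ = 1 ∨ δ₁ = -1) (hδ₂ : δ₂ = 1 ∨ δ₂ = -1) :
    (Matrix.of fun j k : Fin (2 * m + 1) =>
        legendreSym p (((j : ℕ) : ℤ) + ((k : ℕ) : ℤ))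
          + legendreSym p (((j : ℕ) : ℤ) - ((k : ℕ) : ℤ))
          + δ₁ * legendreSym p (((j : ℕ) : ℤ) ^ 2 + δ₂ * ((k : ℕ) : ℤ) ^ 2)).det
      ≡ (-1 : ℤ) ^ (m * (2 * m + 1)) * δ₁ ^ (2 * m + 1) * δ₂ ^ (m * (2 * m + 1))
          * (∏ r ∈ Finset.range (2 * m + 1), (Nat.choose (2 * m) r : ℤ))
          * ∏ j ∈ Finset.range (2 * m + 1), ∏ i ∈ Finset.range j,
              ((j : ℤ) ^ 2 - (i : ℤ) ^ 2) ^ 2 [ZMOD (p : ℤ)] := by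
  have hp2 : p / 2 = 2*m := by omega
  rw [← ZMod.intCast_eq_intCast_iff]
  have h0 : (((Matrix.of fun j k : Fin (2 * m + 1) =>
        legendreSym p (((j : ℕ) : ℤ) + ((k : ℕ) : ℤ))
          + legendreSym p (((j : ℕ) : ℤ) - ((k : ℕ) : ℤ))
          + δ₁ * legendreSym p (((j : ℕ) : ℤ) ^ 2 + δ₂ * ((k : ℕ) : ℤ) ^ 2)).det : ℤ) : ZMod p)
      = ((Int.castRingHom (ZMod p)).mapMatrix (Matrix.of fun j k : Fin (2 * m + 1) =>
        legendreSym p (((j : ℕ) : ℤ) + ((k : ℕ) : ℤ))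
          + legendreSym p (((j : ℕ) : ℤ) - ((k : ℕ) : ℤ))
          + δ₁ * legendreSym p (((j : ℕ) : ℤ) ^ 2 + δ₂ * ((k : ℕ) : ℤ) ^ 2))).det :=
    RingHom.map_det (Int.castRingHom (ZMod p)) (Matrix.of fun j k : Fin (2 * m + 1) =>
        legendreSym p (((j : ℕ) : ℤ) + ((k : ℕ) : ℤ))
          + legendreSym p (((j : ℕ) : ℤ) - ((k : ℕ) : ℤ))
          + δ₁ * legendreSym p (((j : ℕ) : ℤ) ^ 2 + δ₂ * ((k : ℕ) : ℤ) ^ 2))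
  have hmap : (Int.castRingHom (ZMod p)).mapMatrix (Matrix.of fun j k : Fin (2 * m + 1) =>
        legendreSym p (((j : ℕ) : ℤ) + ((k : ℕ) : ℤ))
          + legendreSym p (((j : ℕ) : ℤ) - ((k : ℕ) : ℤ))
          + δ₁ * legendreSym p (((j : ℕ) : ℤ) ^ 2 + δ₂ * ((k : ℕ) : ℤ) ^ 2))
      = Matrix.of (fun j k : Fin (2*m+1) =>
          ((((j:ℕ):ZMod p)) + (((k:ℕ):ZMod p)))^(2*m)
            + ((((j:ℕ):ZMod p)) - (((k:ℕ):ZMod p)))^(2*m)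
            + (δ₁ : ZMod p) * (((((j:ℕ):ZMod p)))^2 + (δ₂ : ZMod p) * ((((k:ℕ):ZMod p)))^2)^(2*m)) := by
    ext j k
    simp only [RingHom.mapMatrix_apply, Matrix.map_apply, Matrix.of_apply,
      Int.coe_castRingHom]
    push_cast
    rw [legendreSym.eq_pow, legendreSym.eq_pow, legendreSym.eq_pow, hp2]
    push_cast
    ring
  have hcore := coreDet m hm (δ₁ : ZMod p) (δ₂ : ZMod p) (fun i : Fin (2*m+1) => ((i:ℕ) : ZMod p))
  have hprod : (∏ i : Fin (2*m+1), ∏ j ∈ Finset.Ioi i,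
        ((((j:ℕ):ZMod p))^2 - (((i:ℕ):ZMod p))^2))^2
      = ∏ j ∈ range (2*m+1), ∏ i ∈ range j, (((j:ZMod p))^2 - ((i:ZMod p))^2)^2 := by
    rw [← Finset.prod_pow]
    rw [Finset.prod_congr rfl (fun i (_ : i ∈ (Finset.univ : Finset (Fin (2*m+1)))) =>
      (Finset.prod_pow (Finset.Ioi i) 2 _).symm)]
    rw [Finset.prod_congr rfl (fun i (_ : i ∈ (Finset.univ : Finset (Fin (2*m+1)))) =>
      prodIoi (2*m+1) i (fun j => (((j:ZMod p))^2 - (((i:ℕ):ZMod p))^2)^2))]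
    rw [Fin.prod_univ_eq_prod_range
      (fun i => ∏ j ∈ Finset.Ico (i+1) (2*m+1), (((j:ZMod p))^2 - ((i:ZMod p))^2)^2) (2*m+1)]
    exact prodTriangle (2*m+1) (fun i j => (((j:ZMod p))^2 - ((i:ZMod p))^2)^2)
  rw [h0, hmap, hcore]
  push_cast
  rw [hprod]
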